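/- Let (S,T) be a pair of random variables on {0,...,m} × {0,...,n}, and let 1 ≤ k ≤ m, 1 ≤ l ≤ n. Then P(S ≥ 1, T ≥ 1) ≤ E[(C(m,k) − C(m−S,k))(C(n,l) − C(n−T,l))] / (C(m−1,k−1) C(n−1,l−1)). (Bivariate Gumbel inequality) -/

import Mathlib

open MeasureTheory

lemma gumbel_nat_aux {m k : ℕ} (hk1 : 1 ≤ k) (hkm : k ≤ m) {s : ℕ} (hs : 1 ≤ s) :
    (m - 1).choose (k - 1) + (m - s).choose k ≤ m.choose k := by
  obtain ⟨a, rfl⟩ : ∃ a, m = a + 1 := ⟨m - 1, by omega⟩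
  obtain ⟨b, rfl⟩ : ∃ b, k = b + 1 := ⟨k - 1, by omega⟩
  simp only [Nat.add_sub_cancel]
  have h1 := Nat.choose_succ_succ a b
  simp only [Nat.succ_eq_add_one] at h1
  have h2 : (a + 1 - s).choose (b + 1) ≤ a.choose (b + 1) :=
    Nat.choose_le_choose _ (by omega)
  omega

lemma gumbel_real_aux {m k : ℕ} (hk1 : 1 ≤ k) (hkm : k ≤ m) {s : ℕ} (hs : 1 ≤ s) :
    ((m - 1).choose (k - 1) : ℝ) ≤ (m.choose k : ℝ) - ((m - s).choose k) := by
  have h := gumbel_nat_aux hk1 hkm hs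
  have h2 := (Nat.cast_le (α := ℝ)).mpr h
  push_cast at h2
  linarith

lemma gumbel_nonneg_aux (m k : ℕ) (s : ℕ) :
    (0 : ℝ) ≤ (m.choose k : ℝ) - ((m - s).choose k) := by
  have h : (m - s).choose k ≤ m.choose k := Nat.choose_le_choose k (by omega)
  have h2 := (Nat.cast_le (α := ℝ)).mpr h
  linarith

theorem bivariate_gumbel_inequality
    {Ω : Type*} [MeasurableSpace Ω] (μ : Measure Ω) [IsProbabilityMeasure μ]
    (m n : ℕ) (S T : Ω → ℕ) (hS : Measurable S) (hT : Measurable T)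
    (hSm : ∀ᵐ ω ∂μ, S ω ≤ m) (hTn : ∀ᵐ ω ∂μ, T ω ≤ n)
    (k l : ℕ) (hk1 : 1 ≤ k) (hkm : k ≤ m) (hl1 : 1 ≤ l) (hln : l ≤ n) :
    (μ {ω | 1 ≤ S ω ∧ 1 ≤ T ω}).toReal ≤
      (∫ ω, ((m.choose k : ℝ) - ((m - S ω).choose k)) *
          ((n.choose l : ℝ) - ((n - T ω).choose l)) ∂μ) /
        (((m - 1).choose (k - 1) : ℝ) * ((n - 1).choose (l - 1) : ℝ)) := by
  set c : ℝ := ((m - 1).choose (k - 1) : ℝ) * ((n - 1).choose (l - 1) : ℝ) with hc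
  have hc1 : 0 < ((m - 1).choose (k - 1) : ℝ) := by
    exact_mod_cast Nat.choose_pos (by omega)
  have hc2 : 0 < ((n - 1).choose (l - 1) : ℝ) := by
    exact_mod_cast Nat.choose_pos (by omega)
  have hcpos : 0 < c := mul_pos hc1 hc2
  set A : Set Ω := {ω | 1 ≤ S ω ∧ 1 ≤ T ω} with hA
  have hAmeas : MeasurableSet A := by
    apply MeasurableSet.inter
    · exact measurableSet_le measurable_const hS
    · exact measurableSet_le measurable_const hT
  set F : Ω → ℝ := fun ω => ((m.choose k : ℝ) - ((m - S ω).choose k)) *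
      ((n.choose l : ℝ) - ((n - T ω).choose l)) with hF
  have hFmeas : Measurable F := by
    have h1 : Measurable fun ω => (((m - S ω).choose k : ℝ)) :=
      (measurable_from_nat (f := fun i => ((i.choose k : ℝ)))).comp
        (measurable_const.sub hS)
    have h2 : Measurable fun ω => (((n - T ω).choose l : ℝ)) :=
      (measurable_from_nat (f := fun i => ((i.choose l : ℝ)))).comp
        (measurable_const.sub hT)
    exact (measurable_const.sub h1).mul (measurable_const.sub h2)
  have hFnn : ∀ ω, 0 ≤ F ω := fun ω =>
    mul_nonneg (gumbel_nonneg_aux m k _) (gumbel_nonneg_aux n l _)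
  have hFbd : ∀ ω, ‖F ω‖ ≤ (m.choose k : ℝ) * (n.choose l : ℝ) := by
    intro ω
    rw [Real.norm_eq_abs, abs_of_nonneg (hFnn ω)]
    apply mul_le_mul _ _ (gumbel_nonneg_aux n l _) (by positivity)
    · have : (0:ℝ) ≤ ((m - S ω).choose k : ℝ) := by positivity
      linarith
    · have : (0:ℝ) ≤ ((n - T ω).choose l : ℝ) := by positivity
      linarith
  have hFint : Integrable F μ := by
    apply Integrable.mono' (integrable_const ((m.choose k : ℝ) * (n.choose l : ℝ)))
      hFmeas.aestronglyMeasurable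
    filter_upwards with ω using hFbd ω
  have hle : ∀ ω, A.indicator (fun _ => c) ω ≤ F ω := by
    intro ω
    by_cases hω : ω ∈ A
    · rw [Set.indicator_of_mem hω]
      exact mul_le_mul (gumbel_real_aux hk1 hkm hω.1) (gumbel_real_aux hl1 hln hω.2)
        hc2.le (gumbel_nonneg_aux m k _)
    · rw [Set.indicator_of_notMem hω]
      exact hFnn ω
  have hint : c * (μ A).toReal ≤ ∫ ω, F ω ∂μ := by
    have := integral_indicator_const (μ := μ) c hAmeas
    calc c * (μ A).toReal = ∫ ω, A.indicator (fun _ => c) ω ∂μ := by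
          rw [this, smul_eq_mul, measureReal_def]; ring
      _ ≤ ∫ ω, F ω ∂μ := by
          apply integral_mono _ hFint hle
          exact (integrable_const c).indicator hAmeas
  rw [le_div_iff₀ hcpos]
  linarith [hint]
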